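/- Let G_1,...,G_k be graphs on [n] and T_1,...,T_k ⊆ [n]. Then the sum of ideals J = P_{T_1}(G_1) + ... + P_{T_k}(G_k) equals (x_s, y_s : s ∈ T_1 ∪ ... ∪ T_k) + J_{H_1} + ... + J_{H_ℓ}, where H_1,...,H_ℓ are the connected components of the graph (⋃_{i=1}^k ⋃_{j=1}^{c_{G_i}(T_i)} G̃_{ij}) − ⋃_{i=1}^k T_i, with G̃_{ij} the complete graphs on the vertex sets of the connected components of G_i − T_i. -/

import Mathlib

open MvPolynomial

section Defs

variable (K : Type*) [Field K] {V : Type*} [Fintype V] [DecidableEq V]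

/-- The variable `x_i`. -/
noncomputable def xv (i : V) : MvPolynomial (Fin 2 × V) K := X (0, i)

/-- The variable `y_i`. -/
noncomputable def yv (i : V) : MvPolynomial (Fin 2 × V) K := X (1, i)

/-- The binomial `x_i y_j - x_j y_i`. -/
noncomputable def binom (i j : V) : MvPolynomial (Fin 2 × V) K :=
  xv K i * yv K j - xv K j * yv K i

/-- The binomial edge ideal `J_G` of a simple graph `G`. -/
noncomputable def beIdeal (G : SimpleGraph V) : Ideal (MvPolynomial (Fin 2 × V) K) :=
  Ideal.span { f | ∃ i j, G.Adj i j ∧ f = binom K i j }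

/-- The graph `G - T`: delete the vertices of `T` (kept as isolated vertices). -/
def delV (G : SimpleGraph V) (T : Finset V) : SimpleGraph V where
  Adj i j := G.Adj i j ∧ i ∉ T ∧ j ∉ T
  symm := ⟨fun i j h => ⟨h.1.symm, h.2.2, h.2.1⟩⟩
  loopless := ⟨fun i h => G.irrefl h.1⟩

/-- `c_G(T)`: the number of connected components of `G - T`. -/
noncomputable def cCount (G : SimpleGraph V) (T : Finset V) : ℕ :=
  Nat.card {c : (delV G T).ConnectedComponent //
    ∃ v, v ∉ T ∧ (delV G T).connectedComponentMk v = c}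

/-- The prime ideal `P_T(G) = (x_i, y_i : i ∈ T) + J_{G̃₁} + ⋯ + J_{G̃_c}`,
where the `G̃ᵢ` are complete graphs on the components of `G - T`. -/
noncomputable def PTIdeal (G : SimpleGraph V) (T : Finset V) :
    Ideal (MvPolynomial (Fin 2 × V) K) :=
  Ideal.span ({ f | ∃ i ∈ T, f = xv K i ∨ f = yv K i } ∪
    { f | ∃ i j, i ∉ T ∧ j ∉ T ∧ i ≠ j ∧ (delV G T).Reachable i j ∧ f = binom K i j })

/-- `T` has the cut point property for `G`. -/
def hasCutPointProperty (G : SimpleGraph V) (T : Finset V) : Prop :=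
  ∀ i ∈ T, cCount G (T.erase i) < cCount G T

/-- The height of an ideal: the infimum of the heights of the primes containing it. -/
noncomputable def idealHeight {R : Type*} [CommRing R] (I : Ideal R) : ℕ∞ :=
  ⨅ P : {P : PrimeSpectrum R // I ≤ P.asIdeal}, Order.height P.1

end Defs

/-- The union of the complete graphs on the vertex sets of the connected components
of the graphs `G i - T i`. -/
def unionCompletedComps {n k : ℕ} (G : Fin k → SimpleGraph (Fin n))
    (T : Fin k → Finset (Fin n)) : SimpleGraph (Fin n) where
  Adj i j := i ≠ j ∧ ∃ m, i ∉ T m ∧ j ∉ T m ∧ (delV (G m) (T m)).Reachable i j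
  symm := ⟨fun i j ⟨hij, m, hi, hj, h⟩ => ⟨hij.symm, m, hj, hi, h.symm⟩⟩
  loopless := ⟨fun i h => h.1 rfl⟩

/-- `P_{T₁}(G₁) + ⋯ + P_{T_k}(G_k) = (x_s, y_s : s ∈ ⋃ Tᵢ) + J_{H₁} + ⋯ + J_{H_ℓ}`,
where `H₁, …, H_ℓ` are the connected components of `(⋃ᵢⱼ G̃ᵢⱼ) - ⋃ᵢ Tᵢ`
(so their binomial edge ideals sum to the binomial edge ideal of that graph). -/
theorem sum_PTIdeal_eq (K : Type*) [Field K] (n k : ℕ) (G : Fin k → SimpleGraph (Fin n))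
    (T : Fin k → Finset (Fin n)) :
    (∑ i, PTIdeal K (G i) (T i)) =
      Ideal.span { f | ∃ s, (∃ i, s ∈ T i) ∧ (f = xv K s ∨ f = yv K s) } +
        beIdeal K (delV (unionCompletedComps G T) (Finset.univ.biUnion T)) := by
  classical
  -- abbreviations
  set A : Set (MvPolynomial (Fin 2 × Fin n) K) :=
    { f | ∃ s, (∃ i, s ∈ T i) ∧ (f = xv K s ∨ f = yv K s) } with hA
  have hvar : ∀ s, (∃ i, s ∈ T i) →
      xv K s ∈ Ideal.span A ∧ yv K s ∈ Ideal.span A := by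
    intro s hs
    exact ⟨Ideal.subset_span ⟨s, hs, Or.inl rfl⟩, Ideal.subset_span ⟨s, hs, Or.inr rfl⟩⟩
  apply le_antisymm
  · rw [Ideal.sum_eq_sup, Finset.sup_le_iff]
    intro m _
    rw [PTIdeal, Ideal.span_le]
    rintro f (⟨s, hs, hf⟩ | ⟨a, b, ha, hb, hab, hr, rfl⟩)
    · refine Ideal.mem_sup_left ?_
      rcases hf with rfl | rfl
      · exact (hvar s ⟨m, hs⟩).1
      · exact (hvar s ⟨m, hs⟩).2
    · by_cases haU : ∃ i, a ∈ T i
      · refine Ideal.mem_sup_left ?_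
        have h1 := (hvar a haU).1
        have h2 := (hvar a haU).2
        have : binom K a b = yv K b * xv K a - xv K b * yv K a := by
          rw [binom]; ring
        rw [this]
        exact Ideal.sub_mem _ (Ideal.mul_mem_left _ _ h1) (Ideal.mul_mem_left _ _ h2)
      · by_cases hbU : ∃ i, b ∈ T i
        · refine Ideal.mem_sup_left ?_
          have h1 := (hvar b hbU).1
          have h2 := (hvar b hbU).2
          have : binom K a b = xv K a * yv K b - yv K a * xv K b := by
            rw [binom]; ring
          rw [this]
          exact Ideal.sub_mem _ (Ideal.mul_mem_left _ _ h2) (Ideal.mul_mem_left _ _ h1)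
        · refine Ideal.mem_sup_right (Ideal.subset_span ?_)
          refine ⟨a, b, ?_, rfl⟩
          refine ⟨⟨hab, m, ha, hb, hr⟩, ?_, ?_⟩
          · simpa [Finset.mem_biUnion] using haU
          · simpa [Finset.mem_biUnion] using hbU
  · rw [Ideal.add_eq_sup, sup_le_iff]
    constructor
    · rw [Ideal.span_le]
      rintro f ⟨s, ⟨i, hi⟩, hf⟩
      have hle : PTIdeal K (G i) (T i) ≤ ∑ j, PTIdeal K (G j) (T j) := by
        rw [Ideal.sum_eq_sup]
        exact Finset.le_sup (f := fun j => PTIdeal K (G j) (T j)) (Finset.mem_univ i)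
      exact hle (Ideal.subset_span (Or.inl ⟨s, hi, hf⟩))
    · rw [beIdeal, Ideal.span_le]
      rintro f ⟨a, b, ⟨⟨hab, m, ha, hb, hr⟩, haU, hbU⟩, rfl⟩
      have hle : PTIdeal K (G m) (T m) ≤ ∑ j, PTIdeal K (G j) (T j) := by
        rw [Ideal.sum_eq_sup]
        exact Finset.le_sup (f := fun j => PTIdeal K (G j) (T j)) (Finset.mem_univ m)
      exact hle (Ideal.subset_span (Or.inr ⟨a, b, ha, hb, hab, hr, rfl⟩))
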